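/- Let A, B be positive definite real symmetric 2×2 matrices. Then B − A is positive definite if and only if π^ℝ(B) − π^ℝ(A) > d_SL(π^SL(B), π^SL(A)). -/

import Mathlib

open Matrix Polynomial

theorem aux_sylv {M : Matrix (Fin 2) (Fin 2) ℝ} (hM : M.IsHermitian) :
    M.PosDef ↔ 0 < M.det ∧ 0 < M.trace := by
  have hsym : M 1 0 = M 0 1 := by
    have := congrFun (congrFun hM.eq 0) 1
    simpa [conjTranspose_apply] using this
  constructor
  · intro h
    refine ⟨h.det_pos, ?_⟩
    have h0 : (0:ℝ) < M 0 0 := by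
      have := h.dotProduct_mulVec_pos (x := ![1,0]) (by intro hc; simpa using congrFun hc 0)
      simpa [dotProduct, Matrix.mulVec, Fin.sum_univ_two] using this
    have h1 : (0:ℝ) < M 1 1 := by
      have := h.dotProduct_mulVec_pos (x := ![0,1]) (by intro hc; simpa using congrFun hc 1)
      simpa [dotProduct, Matrix.mulVec, Fin.sum_univ_two] using this
    rw [Matrix.trace_fin_two]; linarith
  · rintro ⟨hd, ht⟩
    rw [Matrix.det_fin_two, hsym] at hd
    rw [Matrix.trace_fin_two] at ht
    have h00 : 0 < M 0 0 := by nlinarith [sq_nonneg (M 0 1), sq_nonneg (M 0 0 - M 1 1)]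
    refine PosDef.of_dotProduct_mulVec_pos hM fun x hx => ?_
    have hexp : star x ⬝ᵥ M *ᵥ x
        = x 0 * (M 0 0 * x 0 + M 0 1 * x 1) + x 1 * (M 0 1 * x 0 + M 1 1 * x 1) := by
      simp [dotProduct, Matrix.mulVec, Fin.sum_univ_two, hsym]
    rw [hexp]
    by_cases h1 : x 1 = 0
    · have h0 : x 0 ≠ 0 := by
        intro h0; apply hx; funext i; fin_cases i <;> simp [h0, h1]
      rw [h1]
      have := mul_pos h00 (mul_self_pos.mpr h0)
      nlinarith
    · nlinarith [sq_nonneg (M 0 0 * x 0 + M 0 1 * x 1),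
        mul_pos hd (mul_self_pos.mpr h1), mul_self_pos.mpr h1]

theorem aux_conj {n : Type*} [Fintype n] [DecidableEq n] {M P : Matrix n n ℝ}
    (hM : M.PosDef) (hP : IsUnit P.det) : (Pᴴ * M * P).PosDef := by
  refine PosDef.of_dotProduct_mulVec_pos (Matrix.isHermitian_conjTranspose_mul_mul P hM.1) fun x hx => ?_
  have hy : P *ᵥ x ≠ 0 := by
    intro h
    exact hx ((Matrix.mulVec_injective_iff_isUnit.mpr (isUnit_iff_isUnit_det P |>.mpr hP)).eq_iff' (by simp) |>.mp h)
  have : star x ⬝ᵥ (Pᴴ * M * P) *ᵥ x = star (P *ᵥ x) ⬝ᵥ M *ᵥ (P *ᵥ x) := by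
    rw [← mulVec_mulVec, ← mulVec_mulVec, dotProduct_mulVec, ← star_mulVec, mulVec_mulVec]
  rw [this]
  exact hM.dotProduct_mulVec_pos hy

-- det (M - 1) for 2x2
theorem aux_det_sub_one (M : Matrix (Fin 2) (Fin 2) ℝ) :
    (M - 1).det = M.det - M.trace + 1 := by
  simp [Matrix.det_fin_two, Matrix.trace_fin_two, Matrix.sub_apply, Matrix.one_apply]
  ring

theorem aux_arith {u m0 m1 : ℝ} (hu : 0 < u) (h0 : 0 < m0) (h1 : 0 < m1)
    (hp : m0 * m1 = 1) :
    (0 < u * u - u * (m0 + m1) + 1 ∧ 0 < u * (m0 + m1) - 2) ↔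
      (1 < u * m0 ∧ 1 < u * m1) := by
  constructor
  · rintro ⟨hd, ht⟩
    have hprod : 0 < (u * m0 - 1) * (u * m1 - 1) := by nlinarith
    rcases mul_pos_iff.mp hprod with ⟨hx, hy⟩ | ⟨hx, hy⟩
    · constructor <;> linarith
    · exfalso; nlinarith
  · rintro ⟨hx, hy⟩
    constructor <;> nlinarith

theorem aux_pos {m0 m1 : ℝ} (hp : m0 * m1 = 1) (hs : 0 < m0 + m1) : 0 < m0 ∧ 0 < m1 := by
  constructor
  · by_contra hc
    push_neg at hc
    nlinarith [mul_nonneg (neg_nonneg.mpr hc) (by linarith : (0:ℝ) ≤ m1)]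
  · by_contra hc
    push_neg at hc
    nlinarith [mul_nonneg (by linarith : (0:ℝ) ≤ m0) (neg_nonneg.mpr hc)]

theorem stmt6 (A B : Matrix (Fin 2) (Fin 2) ℝ) (hA : A.PosDef) (hB : B.PosDef)
    (mu : Fin 2 → ℝ)
    (hmu : (((B.det ^ ((1 : ℝ) / 2))⁻¹ • B) * (((A.det ^ ((1 : ℝ) / 2))⁻¹ • A))⁻¹).charpoly
      = ∏ i, (Polynomial.X - Polynomial.C (mu i))) :
    (B - A).PosDef ↔
      Real.sqrt (∑ i, Real.log (mu i) ^ 2)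
        < Real.log B.det / Real.sqrt 2 - Real.log A.det / Real.sqrt 2 := by
  have ha : 0 < A.det := hA.det_pos
  have hb : 0 < B.det := hB.det_pos
  set ka : ℝ := A.det ^ ((1:ℝ)/2) with hka_def
  set kb : ℝ := B.det ^ ((1:ℝ)/2) with hkb_def
  have hka : 0 < ka := Real.rpow_pos_of_pos ha _
  have hkb : 0 < kb := Real.rpow_pos_of_pos hb _
  have hka2 : ka * ka = A.det := by
    rw [hka_def, ← Real.rpow_add ha]; norm_num
  have hkb2 : kb * kb = B.det := by
    rw [hkb_def, ← Real.rpow_add hb]; norm_num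
  have hAdet : IsUnit A.det := isUnit_iff_ne_zero.mpr ha.ne'
  -- the matrix N
  have hAinv : (ka⁻¹ • A)⁻¹ = ka • A⁻¹ := by
    apply Matrix.inv_eq_right_inv
    rw [Matrix.smul_mul, Matrix.mul_smul, smul_smul, Matrix.mul_nonsing_inv A hAdet,
      inv_mul_cancel₀ hka.ne', one_smul]
  have hN : ((kb⁻¹ • B) * ((ka⁻¹ • A))⁻¹) = (kb⁻¹ * ka) • (B * A⁻¹) := by
    rw [hAinv, Matrix.smul_mul, Matrix.mul_smul, smul_smul]
  rw [hN] at hmu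
  -- coefficients of the product polynomial
  have hQ : ∏ i, (Polynomial.X - Polynomial.C (mu i))
      = (Polynomial.X - Polynomial.C (mu 0)) * (Polynomial.X - Polynomial.C (mu 1)) :=
    Fin.prod_univ_two _
  have hQ0 : (∏ i, (Polynomial.X - Polynomial.C (mu i))).coeff 0 = mu 0 * mu 1 := by
    rw [hQ]; simp [Polynomial.coeff_mul, Fin.sum_univ_two, Polynomial.coeff_sub]
  have hQ1 : (∏ i, (Polynomial.X - Polynomial.C (mu i))).coeff 1 = -(mu 0 + mu 1) := by
    rw [hQ]
    have : (Polynomial.X - Polynomial.C (mu 0)) * (Polynomial.X - Polynomial.C (mu 1))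
        = Polynomial.X ^ 2 - Polynomial.C (mu 0 + mu 1) * Polynomial.X
          + Polynomial.C (mu 0 * mu 1) := by
      simp only [map_add, Polynomial.C_mul]; ring
    rw [this]
    simp
  -- determinant and trace of N
  have hdetN : ((kb⁻¹ * ka) • (B * A⁻¹)).det = mu 0 * mu 1 := by
    have h := Matrix.det_eq_sign_charpoly_coeff ((kb⁻¹ * ka) • (B * A⁻¹))
    rw [hmu, hQ0] at h
    simpa using h
  have htrN : ((kb⁻¹ * ka) • (B * A⁻¹)).trace = mu 0 + mu 1 := by
    have h := Matrix.trace_eq_neg_charpoly_coeff ((kb⁻¹ * ka) • (B * A⁻¹))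
    rw [hmu] at h
    simp only [Fintype.card_fin] at h
    rw [h, hQ1, neg_neg]
  have hdetAinv : (A⁻¹).det = (A.det)⁻¹ := by
    rw [Matrix.det_nonsing_inv, Ring.inverse_eq_inv']
  have hprod : mu 0 * mu 1 = 1 := by
    rw [← hdetN, Matrix.det_smul, Matrix.det_mul, hdetAinv]
    simp only [Fintype.card_fin]
    field_simp
    nlinarith [hka2, hkb2]
  have hsum : mu 0 + mu 1 = (kb⁻¹ * ka) * (B * A⁻¹).trace := by
    rw [← htrN, Matrix.trace_smul]; simp [smul_eq_mul]
  -- square root of A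
  have hSsd : A.PosSemidef := hA.posSemidef
  set S : Matrix (Fin 2) (Fin 2) ℝ := (open scoped MatrixOrder in CFC.sqrt A) with hS_def
  have hSherm : S.IsHermitian := (open scoped MatrixOrder in (CFC.sqrt_nonneg A).posSemidef.1)
  have hSS : S * S = A := (open scoped MatrixOrder in CFC.sqrt_mul_sqrt_self A hSsd.nonneg)
  have hdetS2 : S.det * S.det = A.det := by rw [← Matrix.det_mul, hSS]
  have hdS : IsUnit S.det := by
    refine isUnit_iff_ne_zero.mpr fun h => ha.ne' ?_
    rw [← hdetS2, h, mul_zero]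
  have hdSinv : IsUnit (S⁻¹).det := by
    rw [Matrix.det_nonsing_inv, Ring.inverse_eq_inv']
    exact isUnit_iff_ne_zero.mpr (inv_ne_zero (isUnit_iff_ne_zero.mp hdS))
  have hSinv_herm : (S⁻¹).IsHermitian := hSherm.inv
  have h1 : S * S⁻¹ = 1 := Matrix.mul_nonsing_inv S hdS
  have h2 : S⁻¹ * S = 1 := Matrix.nonsing_inv_mul S hdS
  set C : Matrix (Fin 2) (Fin 2) ℝ := S⁻¹ * B * S⁻¹ with hC_def
  have hCpd : C.PosDef := by
    have := aux_conj hB hdSinv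
    rwa [hSinv_herm.eq] at this
  have hAinvSS : A⁻¹ = S⁻¹ * S⁻¹ := by rw [← hSS, Matrix.mul_inv_rev]
  -- relation between B - A and C - 1
  have key : S * C * S = B := by
    rw [hC_def, ← Matrix.mul_assoc, ← Matrix.mul_assoc, h1, Matrix.one_mul,
      Matrix.mul_assoc, h2, Matrix.mul_one]
  have key2 : S⁻¹ * A * S⁻¹ = 1 := by
    rw [← hSS, ← Matrix.mul_assoc, h2, Matrix.one_mul, h1]
  have hback : S * (C - 1) * S = B - A := by
    rw [Matrix.mul_sub, Matrix.sub_mul, Matrix.mul_one, key, hSS]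
  have hfwd : S⁻¹ * (B - A) * S⁻¹ = C - 1 := by
    rw [Matrix.mul_sub, Matrix.sub_mul, key2, ← hC_def]
  -- equivalence via congruence
  have hiff : (B - A).PosDef ↔ (C - 1).PosDef := by
    constructor
    · intro h
      rw [← hfwd]
      have := aux_conj h hdSinv
      rwa [hSinv_herm.eq] at this
    · intro h
      rw [← hback]
      have := aux_conj h hdS
      rwa [hSherm.eq] at this
  have hCherm : C.IsHermitian := hCpd.1
  have hCm1herm : (C - 1).IsHermitian := hCherm.sub Matrix.isHermitian_one
  have htrC_pos : 0 < C.trace := ((aux_sylv hCherm).mp hCpd).2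
  have htrC : C.trace = (B * A⁻¹).trace := by
    rw [hC_def, Matrix.trace_mul_comm (S⁻¹ * B) S⁻¹, ← Matrix.mul_assoc, ← hAinvSS,
      Matrix.trace_mul_comm]
  have hdetC : C.det = B.det * A.det⁻¹ := by
    rw [hC_def, Matrix.det_mul, Matrix.det_mul, Matrix.det_nonsing_inv, Ring.inverse_eq_inv']
    rw [← hdetS2, mul_inv]
    ring
  have hu : 0 < kb * ka⁻¹ := mul_pos hkb (inv_pos.mpr hka)
  have hT : C.trace = (kb * ka⁻¹) * (mu 0 + mu 1) := by
    rw [htrC, hsum]; field_simp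
  have hsum_pos : 0 < mu 0 + mu 1 := by
    have h : 0 < (kb * ka⁻¹) * (mu 0 + mu 1) := by rw [← hT]; exact htrC_pos
    rcases mul_pos_iff.mp h with ⟨_, hs⟩ | ⟨hu', _⟩
    · exact hs
    · linarith
  obtain ⟨hmu0, hmu1⟩ := aux_pos hprod hsum_pos
  have hdetCm1 : (C - 1).det = C.det - C.trace + 1 := aux_det_sub_one C
  have htrCm1 : (C - 1).trace = C.trace - 2 := by
    rw [Matrix.trace_sub, Matrix.trace_one]
    norm_num
  have hu2 : (kb * ka⁻¹) * (kb * ka⁻¹) = B.det * A.det⁻¹ := by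
    rw [← hkb2, ← hka2, mul_inv]
    ring
  rw [hiff, aux_sylv hCm1herm, hdetCm1, htrCm1, hdetC, hT, ← hu2,
    aux_arith hu hmu0 hmu1 hprod]
  -- the logarithmic side
  have hlka : Real.log ka = Real.log A.det / 2 := by
    rw [hka_def, Real.log_rpow ha]; ring
  have hlkb : Real.log kb = Real.log B.det / 2 := by
    rw [hkb_def, Real.log_rpow hb]; ring
  have hmu1inv : mu 1 = (mu 0)⁻¹ := eq_inv_of_mul_eq_one_right hprod
  have hsumlog : ∑ i, Real.log (mu i) ^ 2 = 2 * Real.log (mu 0) ^ 2 := by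
    rw [Fin.sum_univ_two, hmu1inv, Real.log_inv]; ring
  have hsqrt : Real.sqrt (2 * Real.log (mu 0) ^ 2)
      = Real.sqrt 2 * |Real.log (mu 0)| := by
    rw [Real.sqrt_mul (by norm_num), Real.sqrt_sq_eq_abs]
  have s2 : Real.sqrt 2 * Real.sqrt 2 = 2 := Real.mul_self_sqrt (by norm_num)
  have hs2 : Real.sqrt 2 ≠ 0 := by positivity
  have hRHS : Real.log B.det / Real.sqrt 2 - Real.log A.det / Real.sqrt 2
      = Real.sqrt 2 * Real.log (kb * ka⁻¹) := by
    rw [Real.log_mul hkb.ne' (inv_ne_zero hka.ne'), Real.log_inv, hlka, hlkb]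
    field_simp
    linear_combination (Real.log A.det - Real.log B.det) * s2
  rw [hsumlog, hsqrt, hRHS, mul_lt_mul_iff_right₀ (Real.sqrt_pos.mpr two_pos), abs_lt]
  have hupos : 0 < kb * ka⁻¹ := hu
  constructor
  · rintro ⟨hx, hy⟩
    constructor
    · rw [← Real.log_inv, Real.log_lt_log_iff (inv_pos.mpr hupos) hmu0]
      rw [inv_lt_iff_one_lt_mul₀' hupos]
      exact hx
    · rw [Real.log_lt_log_iff hmu0 hupos]
      have h' : 1 * mu 0 < kb * ka⁻¹ * mu 1 * mu 0 := mul_lt_mul_of_pos_right hy hmu0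
      rw [one_mul, mul_assoc, mul_comm (mu 1), hprod, mul_one] at h'
      exact h'
  · rintro ⟨hx, hy⟩
    rw [← Real.log_inv, Real.log_lt_log_iff (inv_pos.mpr hupos) hmu0,
      inv_lt_iff_one_lt_mul₀' hupos] at hx
    rw [Real.log_lt_log_iff hmu0 hupos] at hy
    refine ⟨hx, ?_⟩
    have h' : mu 0 * mu 1 < kb * ka⁻¹ * mu 1 := mul_lt_mul_of_pos_right hy hmu1
    rwa [hprod] at h'
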